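/- Let d ≥ 1 and let T = ⋃_{j≥0} [d]^j be the countable set of all finite tuples of indices from {1,…,d} (including the empty tuple). For z ∈ ℝ^d with ‖z‖₂ ≤ 1, define φ(z) ∈ ℝ^T by φ(z)_{(k_1,…,k_j)} = 2^{−(j+1)/2} z_{k_1} ⋯ z_{k_j}. Then for all z, z' in the closed unit ball of ℝ^d: (i) φ(z) is square-summable, i.e. φ(z) ∈ ℓ²(T), with ∑_{τ∈T} φ(z)_τ² = 1/(2 − ‖z‖₂²); (ii) the family (φ(z)_τ φ(z')_τ)_{τ∈T} is absolutely summable and ∑_{τ∈T} φ(z)_τ φ(z')_τ = ∑_{j=0}^∞ 2^{−(j+1)} ⟨z, z'⟩^j = 1/(2 − ⟨z, z'⟩). -/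

import Mathlib

open scoped RealInnerProductSpace

abbrev Tup (d : ℕ) : Type := Σ j : ℕ, Fin j → Fin d

noncomputable def phi (d : ℕ) (z : EuclideanSpace ℝ (Fin d)) (τ : Tup d) : ℝ :=
  (Real.sqrt 2)⁻¹ ^ (τ.1 + 1) * ∏ i : Fin τ.1, z (τ.2 i)

lemma phi_mul {d : ℕ} (z z' : EuclideanSpace ℝ (Fin d)) (τ : Tup d) :
    phi d z τ * phi d z' τ = (2:ℝ)⁻¹ ^ (τ.1 + 1) * ∏ i, (z (τ.2 i) * z' (τ.2 i)) := by
  have h2 : (Real.sqrt 2)⁻¹ * (Real.sqrt 2)⁻¹ = (2:ℝ)⁻¹ := by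
    rw [← mul_inv, Real.mul_self_sqrt (by norm_num)]
  unfold phi
  rw [mul_mul_mul_comm, ← mul_pow, h2, ← Finset.prod_mul_distrib]

lemma sum_prod {d : ℕ} (w w' : EuclideanSpace ℝ (Fin d)) (j : ℕ) :
    ∑ k : Fin j → Fin d, ∏ i, (w (k i) * w' (k i)) = (∑ m, w m * w' m) ^ j := by
  have : ((∑ m, w m * w' m) ^ j) = ∏ _i : Fin j, ∑ m, w m * w' m := by
    simp [Finset.prod_const]
  rw [this, Finset.prod_univ_sum]
  simp [Fintype.piFinset_univ]

lemma inner_eq {d : ℕ} (z z' : EuclideanSpace ℝ (Fin d)) : ⟪z, z'⟫ = ∑ m, z m * z' m := by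
  simp [PiLp.inner_apply, RCLike.inner_apply]
  exact Finset.sum_congr rfl fun _ _ => mul_comm _ _

lemma abs_sum_le {d : ℕ} (z z' : EuclideanSpace ℝ (Fin d)) (hz : ‖z‖ ≤ 1) (hz' : ‖z'‖ ≤ 1) :
    ∑ m, |z m| * |z' m| ≤ 1 := by
  set w : EuclideanSpace ℝ (Fin d) := WithLp.toLp 2 fun m => |z m| with hw
  set w' : EuclideanSpace ℝ (Fin d) := WithLp.toLp 2 fun m => |z' m| with hw'
  have h1 : ∑ m, |z m| * |z' m| = ⟪w, w'⟫ := (inner_eq w w').symm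
  have hnw : ‖w‖ = ‖z‖ := by
    simp [EuclideanSpace.norm_eq, hw, sq_abs]
  have hnw' : ‖w'‖ = ‖z'‖ := by
    simp [EuclideanSpace.norm_eq, hw', sq_abs]
  calc ∑ m, |z m| * |z' m| = ⟪w, w'⟫ := h1
    _ ≤ ‖w‖ * ‖w'‖ := real_inner_le_norm w w'
    _ ≤ 1 := by rw [hnw, hnw']; nlinarith [norm_nonneg z, norm_nonneg z']

lemma summable_geom_half : Summable (fun j : ℕ => (2:ℝ)⁻¹ ^ (j + 1)) := by
  simp_rw [pow_succ]
  exact (summable_geometric_of_lt_one (by norm_num) (by norm_num)).mul_right _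

lemma main_summable {d : ℕ} (z z' : EuclideanSpace ℝ (Fin d)) (hz : ‖z‖ ≤ 1) (hz' : ‖z'‖ ≤ 1) :
    Summable fun τ : Tup d => |phi d z τ * phi d z' τ| := by
  rw [summable_sigma_of_nonneg (fun τ => abs_nonneg _)]
  refine ⟨fun j => Summable.of_finite, ?_⟩
  refine Summable.of_nonneg_of_le (fun j => tsum_nonneg fun k => abs_nonneg _)
    (fun j => ?_) summable_geom_half
  rw [tsum_fintype]
  calc ∑ k : Fin j → Fin d, |phi d z ⟨j, k⟩ * phi d z' ⟨j, k⟩|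
      = ∑ k : Fin j → Fin d, (2:ℝ)⁻¹ ^ (j + 1) * ∏ i, (|z (k i)| * |z' (k i)|) := by
        refine Finset.sum_congr rfl fun k _ => ?_
        rw [phi_mul, abs_mul, abs_pow, Finset.abs_prod]
        norm_num [abs_mul]
    _ = (2:ℝ)⁻¹ ^ (j + 1) * (∑ m, |z m| * |z' m|) ^ j := by
        rw [← Finset.mul_sum]
        exact congrArg _ (sum_prod (WithLp.toLp 2 fun m => |z m|) (WithLp.toLp 2 fun m => |z' m|) j)
    _ ≤ (2:ℝ)⁻¹ ^ (j + 1) * 1 := by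
        have hnn : (0:ℝ) ≤ ∑ m, |z m| * |z' m| :=
          Finset.sum_nonneg fun m _ => by positivity
        have hle : (∑ m, |z m| * |z' m|) ^ j ≤ 1 := pow_le_one₀ hnn (abs_sum_le z z' hz hz')
        exact mul_le_mul_of_nonneg_left hle (by positivity)
    _ = (2:ℝ)⁻¹ ^ (j + 1) := mul_one _

lemma main_tsum {d : ℕ} (z z' : EuclideanSpace ℝ (Fin d)) (hz : ‖z‖ ≤ 1) (hz' : ‖z'‖ ≤ 1) :
    (∑' τ : Tup d, phi d z τ * phi d z' τ)
      = ∑' j : ℕ, (2:ℝ)⁻¹ ^ (j + 1) * ⟪z, z'⟫ ^ j := by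
  have hs : Summable fun τ : Tup d => phi d z τ * phi d z' τ :=
    (main_summable z z' hz hz').of_abs
  rw [hs.tsum_sigma]
  refine tsum_congr fun j => ?_
  rw [tsum_fintype]
  calc ∑ k : Fin j → Fin d, phi d z ⟨j, k⟩ * phi d z' ⟨j, k⟩
      = ∑ k : Fin j → Fin d, (2:ℝ)⁻¹ ^ (j + 1) * ∏ i, (z (k i) * z' (k i)) := by
        exact Finset.sum_congr rfl fun k _ => phi_mul z z' ⟨j, k⟩
    _ = (2:ℝ)⁻¹ ^ (j + 1) * ⟪z, z'⟫ ^ j := by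
        rw [← Finset.mul_sum, sum_prod, inner_eq]

lemma geom_val (s : ℝ) (hs : |s| ≤ 1) :
    (∑' j : ℕ, (2:ℝ)⁻¹ ^ (j + 1) * s ^ j) = 1 / (2 - s) := by
  have hr : |(2:ℝ)⁻¹ * s| < 1 := by
    rw [abs_mul]
    calc |(2:ℝ)⁻¹| * |s| ≤ 2⁻¹ * 1 := by
          rw [abs_of_nonneg (by norm_num : (0:ℝ) ≤ 2⁻¹)]; gcongr
      _ < 1 := by norm_num
  have h1 : ∀ j : ℕ, (2:ℝ)⁻¹ ^ (j + 1) * s ^ j = 2⁻¹ * ((2⁻¹ * s) ^ j) := by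
    intro j; rw [pow_succ, mul_pow]; ring
  simp_rw [h1]
  rw [tsum_mul_left, tsum_geometric_of_abs_lt_one hr]
  have hne : (2:ℝ) - s ≠ 0 := by
    have : s ≤ 1 := (abs_le.mp hs).2
    linarith
  field_simp

theorem inverse_polynomial_kernel_feature_map
    (d : ℕ) (hd : 1 ≤ d)
    (z z' : EuclideanSpace ℝ (Fin d)) (hz : ‖z‖ ≤ 1) (hz' : ‖z'‖ ≤ 1) :
    (Summable fun τ : Tup d => (phi d z τ) ^ 2) ∧
    (∑' τ : Tup d, (phi d z τ) ^ 2) = 1 / (2 - ‖z‖ ^ 2) ∧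
    (Summable fun τ : Tup d => |phi d z τ * phi d z' τ|) ∧
    (∑' τ : Tup d, phi d z τ * phi d z' τ)
      = (∑' j : ℕ, ((2 : ℝ))⁻¹ ^ (j + 1) * ⟪z, z'⟫ ^ j) ∧
    (∑' j : ℕ, ((2 : ℝ))⁻¹ ^ (j + 1) * ⟪z, z'⟫ ^ j) = 1 / (2 - ⟪z, z'⟫) := by
  have hsq : (fun τ : Tup d => (phi d z τ) ^ 2)
      = fun τ : Tup d => |phi d z τ * phi d z τ| := by
    funext τ; rw [abs_mul_self, sq]
  have hzz : ⟪z, z⟫ = ‖z‖ ^ 2 := real_inner_self_eq_norm_sq z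
  have hip : |⟪z, z'⟫| ≤ 1 := by
    calc |⟪z, z'⟫| ≤ ‖z‖ * ‖z'‖ := abs_real_inner_le_norm z z'
      _ ≤ 1 := by nlinarith [norm_nonneg z, norm_nonneg z']
  refine ⟨?_, ?_, main_summable z z' hz hz', main_tsum z z' hz hz', geom_val _ hip⟩
  · rw [hsq]; exact main_summable z z hz hz
  · have := main_tsum z z hz hz
    rw [hzz] at this
    calc (∑' τ : Tup d, (phi d z τ) ^ 2)
        = ∑' τ : Tup d, phi d z τ * phi d z τ := by
          refine tsum_congr fun τ => ?_; rw [sq]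
      _ = ∑' j : ℕ, (2:ℝ)⁻¹ ^ (j + 1) * (‖z‖ ^ 2) ^ j := this
      _ = 1 / (2 - ‖z‖ ^ 2) := by
          apply geom_val
          rw [abs_of_nonneg (by positivity)]
          nlinarith [norm_nonneg z]
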